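/- For the complete-graph difference matrix D, the Moore–Penrose pseudo-inverse satisfies D† = (1/n) Dᵀ. -/

import Mathlib

open Matrix

abbrev PairIdx (n : ℕ) := {e : Fin n × Fin n // e.1 < e.2}

/-- The complete-graph difference matrix `D`: the block of rows indexed by the pair
`(i, i')` maps `vec U` to `U_i - U_{i'}`. -/
noncomputable def Dmat (n p : ℕ) : Matrix (PairIdx n × Fin p) (Fin n × Fin p) ℝ :=
  fun ej kl =>
    (if kl.1 = ej.1.val.1 then (1 : ℝ) else if kl.1 = ej.1.val.2 then -1 else 0) *
      (if ej.2 = kl.2 then 1 else 0)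

/-- `G` satisfies the four Penrose conditions for being the Moore–Penrose
pseudo-inverse of `A`. -/
def IsMoorePenrose {m n : Type*} [Fintype m] [Fintype n]
    (A : Matrix m n ℝ) (G : Matrix n m ℝ) : Prop :=
  A * G * A = A ∧ G * A * G = G ∧ (A * G)ᵀ = A * G ∧ (G * A)ᵀ = G * A


section KeyAux
open Finset
lemma card_fst (n : ℕ) (k : Fin n) :
    ((Finset.univ.filter (fun x : Fin n × Fin n => x.1 < x.2)).filter (fun x => k = x.1)).card
      = n - 1 - (k : ℕ) := by
  rw [← Fin.card_Ioi k]
  apply Finset.card_nbij (fun x => x.2)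
  · intro x hx
    simp only [mem_coe, mem_filter, mem_univ, true_and] at hx
    exact hx.2 ▸ (Finset.mem_Ioi.mpr hx.1)
  · intro x hx y hy hxy
    simp only [mem_coe, mem_filter, mem_univ, true_and] at hx hy
    exact Prod.ext (hx.2.symm.trans hy.2) hxy
  · intro y hy
    simp only [mem_coe, Finset.mem_Ioi] at hy
    exact ⟨(k, y), by simp [hy], rfl⟩

lemma card_snd (n : ℕ) (k : Fin n) :
    ((Finset.univ.filter (fun x : Fin n × Fin n => x.1 < x.2)).filter (fun x => k = x.2)).card
      = (k : ℕ) := by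
  rw [← Fin.card_Iio k]
  apply Finset.card_nbij (fun x => x.1)
  · intro x hx
    simp only [mem_coe, mem_filter, mem_univ, true_and] at hx
    exact hx.2 ▸ (Finset.mem_Iio.mpr hx.1)
  · intro x hx y hy hxy
    simp only [mem_coe, mem_filter, mem_univ, true_and] at hx hy
    exact Prod.ext hxy (hx.2.symm.trans hy.2)
  · intro y hy
    simp only [mem_coe, Finset.mem_Iio] at hy
    exact ⟨(y, k), by simp [hy], rfl⟩

lemma key (n : ℕ) (k m : Fin n) :
    ∑ e : PairIdx n,
      ((if k = e.val.1 then (1:ℝ) else 0) - (if k = e.val.2 then 1 else 0)) *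
      ((if m = e.val.1 then (1:ℝ) else 0) - (if m = e.val.2 then 1 else 0))
      = n * (if k = m then 1 else 0) - 1 := by
  rw [← Finset.sum_subtype (Finset.univ.filter (fun x : Fin n × Fin n => x.1 < x.2))
      (by intro x; simp) (fun x => ((if k = x.1 then (1:ℝ) else 0) - (if k = x.2 then 1 else 0)) *
      ((if m = x.1 then (1:ℝ) else 0) - (if m = x.2 then 1 else 0)))]
  by_cases hkm : k = m
  · subst hkm
    have hpt : ∀ x ∈ Finset.univ.filter (fun x : Fin n × Fin n => x.1 < x.2),
        ((if k = x.1 then (1:ℝ) else 0) - (if k = x.2 then 1 else 0)) *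
        ((if k = x.1 then (1:ℝ) else 0) - (if k = x.2 then 1 else 0)) =
        (if k = x.1 then (1:ℝ) else 0) + (if k = x.2 then (1:ℝ) else 0) := by
      intro x hx
      simp only [Finset.mem_filter, Finset.mem_univ, true_and] at hx
      have hne : ¬(k = x.1 ∧ k = x.2) := by
        rintro ⟨h1, h2⟩; exact absurd (h1 ▸ h2 ▸ hx) (lt_irrefl _)
      split_ifs <;> simp_all <;> ring
    rw [Finset.sum_congr rfl hpt, Finset.sum_add_distrib,
        Finset.sum_boole, Finset.sum_boole, card_fst, card_snd]
    have hk := k.isLt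
    have h1 : n - 1 - (k : ℕ) + (k : ℕ) = n - 1 := by omega
    rw [← Nat.cast_add, h1, Nat.cast_sub (by omega)]
    simp
  · have hpt : ∀ x ∈ Finset.univ.filter (fun x : Fin n × Fin n => x.1 < x.2),
        ((if k = x.1 then (1:ℝ) else 0) - (if k = x.2 then 1 else 0)) *
        ((if m = x.1 then (1:ℝ) else 0) - (if m = x.2 then 1 else 0)) =
        -(if x = (k,m) then (1:ℝ) else 0) + -(if x = (m,k) then (1:ℝ) else 0) := by
      intro x _
      rcases x with ⟨a, b⟩
      simp only [Prod.mk.injEq]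
      by_cases hak : k = a <;> by_cases hbm : m = b <;> by_cases ham : m = a <;>
        by_cases hbk : k = b <;> subst_vars <;>
        simp_all [eq_comm] <;> ring
    rw [Finset.sum_congr rfl hpt, Finset.sum_add_distrib, Finset.sum_neg_distrib,
        Finset.sum_neg_distrib,
        Finset.sum_ite_eq' _ ((k,m) : Fin n × Fin n) (fun _ => (1:ℝ)),
        Finset.sum_ite_eq' _ ((m,k) : Fin n × Fin n) (fun _ => (1:ℝ))]
    simp only [Finset.mem_filter, Finset.mem_univ, true_and, hkm, if_false]
    rcases lt_trichotomy k m with h | h | h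
    · simp [h, lt_asymm h, h.le]
    · exact absurd h hkm
    · simp [h, lt_asymm h, h.le]

end KeyAux

lemma sval {n : ℕ} {i i' k : Fin n} (h : i ≠ i') :
    (if k = i then (1:ℝ) else if k = i' then -1 else 0)
      = (if k = i then 1 else 0) - (if k = i' then 1 else 0) := by
  split_ifs <;> simp_all

lemma Dmat_eq {n p : ℕ} (e : PairIdx n) (j : Fin p) (k : Fin n) (l : Fin p) :
    Dmat n p (e, j) (k, l) =
      ((if k = e.val.1 then (1:ℝ) else 0) - (if k = e.val.2 then 1 else 0)) *
        (if j = l then 1 else 0) := by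
  show (if k = e.val.1 then (1:ℝ) else if k = e.val.2 then -1 else 0) * _ = _
  rw [sval (ne_of_lt e.2)]

lemma rowsum {n p : ℕ} (e : PairIdx n) (j : Fin p) (l : Fin p) :
    ∑ k : Fin n, Dmat n p (e, j) (k, l) = 0 := by
  rw [Finset.sum_congr rfl (fun k _ => Dmat_eq e j k l), ← Finset.sum_mul,
      Finset.sum_sub_distrib,
      Finset.sum_ite_eq' Finset.univ e.val.1 (fun _ => (1:ℝ)),
      Finset.sum_ite_eq' Finset.univ e.val.2 (fun _ => (1:ℝ))]
  simp

lemma DtD (n p : ℕ) :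
    (Dmat n p)ᵀ * Dmat n p = fun kl ml =>
      if kl.2 = ml.2 then (n:ℝ) * (if kl.1 = ml.1 then 1 else 0) - 1 else 0 := by
  funext kl ml
  obtain ⟨k, l⟩ := kl
  obtain ⟨m, l'⟩ := ml
  show ∑ x : PairIdx n × Fin p, (Dmat n p)ᵀ (k,l) x * Dmat n p x (m,l') = _
  simp only [transpose_apply]
  rw [Fintype.sum_prod_type]
  have hpt : ∀ (e : PairIdx n) (j : Fin p),
      Dmat n p (e,j) (k,l) * Dmat n p (e,j) (m,l') =
      (((if k = e.val.1 then (1:ℝ) else 0) - (if k = e.val.2 then 1 else 0)) *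
       ((if m = e.val.1 then (1:ℝ) else 0) - (if m = e.val.2 then 1 else 0))) *
      (if j = l then (if j = l' then (1:ℝ) else 0) else 0) := by
    intro e j
    rw [Dmat_eq, Dmat_eq]
    have : (if j = l then (1:ℝ) else 0) * (if j = l' then 1 else 0)
        = (if j = l then (if j = l' then (1:ℝ) else 0) else 0) := by
      split_ifs <;> simp
    rw [← this]; ring
  rw [Finset.sum_congr rfl
      (fun e _ => Finset.sum_congr rfl (fun j _ => hpt e j))]
  have hj : ∀ e : PairIdx n, ∑ j : Fin p,
      (((if k = e.val.1 then (1:ℝ) else 0) - (if k = e.val.2 then 1 else 0)) *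
       ((if m = e.val.1 then (1:ℝ) else 0) - (if m = e.val.2 then 1 else 0))) *
      (if j = l then (if j = l' then (1:ℝ) else 0) else 0) =
      (((if k = e.val.1 then (1:ℝ) else 0) - (if k = e.val.2 then 1 else 0)) *
       ((if m = e.val.1 then (1:ℝ) else 0) - (if m = e.val.2 then 1 else 0))) *
      (if l = l' then (1:ℝ) else 0) := by
    intro e
    rw [← Finset.mul_sum, Finset.sum_ite_eq' Finset.univ l (fun j => if j = l' then (1:ℝ) else 0)]
    simp
  rw [Finset.sum_congr rfl (fun e _ => hj e), ← Finset.sum_mul, key]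
  by_cases h : l = l' <;> simp [h]

lemma DDtD (n p : ℕ) :
    Dmat n p * ((Dmat n p)ᵀ * Dmat n p) = (n:ℝ) • Dmat n p := by
  funext ej ml
  obtain ⟨e, j⟩ := ej
  obtain ⟨m, l⟩ := ml
  rw [DtD]
  show ∑ x : Fin n × Fin p, Dmat n p (e,j) x *
      (if x.2 = l then (n:ℝ) * (if x.1 = m then 1 else 0) - 1 else 0) = _
  rw [Fintype.sum_prod_type]
  have h1 : ∀ (k : Fin n) (l' : Fin p),
      Dmat n p (e,j) (k,l') * (if l' = l then (n:ℝ) * (if k = m then 1 else 0) - 1 else 0)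
      = if l' = l then Dmat n p (e,j) (k,l') * ((n:ℝ) * (if k = m then 1 else 0) - 1) else 0 := by
    intro k l'; split_ifs <;> simp
  rw [Finset.sum_congr rfl (fun k _ => Finset.sum_congr rfl (fun l' _ => h1 k l'))]
  rw [Finset.sum_congr rfl (fun k _ =>
    Finset.sum_ite_eq' Finset.univ l
      (fun l' => Dmat n p (e,j) (k,l') * ((n:ℝ) * (if k = m then 1 else 0) - 1)))]
  simp only [Finset.mem_univ, if_true]
  have h2 : ∀ k : Fin n,
      Dmat n p (e,j) (k,l) * ((n:ℝ) * (if k = m then 1 else 0) - 1)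
      = (n:ℝ) * (if k = m then Dmat n p (e,j) (k,l) else 0) - Dmat n p (e,j) (k,l) := by
    intro k; split_ifs <;> ring
  rw [Finset.sum_congr rfl (fun k _ => h2 k), Finset.sum_sub_distrib, ← Finset.mul_sum,
      Finset.sum_ite_eq' Finset.univ m (fun k => Dmat n p (e,j) (k,l)), rowsum]
  simp [Matrix.smul_apply]

/-- the Moore–Penrose pseudo-inverse of D is (1/n) Dᵀ. -/
theorem stmt1 (n p : ℕ) (hn : 2 ≤ n) (hp : 1 ≤ p) :
    IsMoorePenrose (Dmat n p) ((n : ℝ)⁻¹ • (Dmat n p)ᵀ) := by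
  have hn0 : (n : ℝ) ≠ 0 := by positivity
  have hmain : Dmat n p * (Dmat n p)ᵀ * Dmat n p = (n:ℝ) • Dmat n p := by
    rw [Matrix.mul_assoc]; exact DDtD n p
  have hmainT : (Dmat n p)ᵀ * Dmat n p * (Dmat n p)ᵀ = (n:ℝ) • (Dmat n p)ᵀ := by
    have h := congrArg Matrix.transpose hmain
    simpa [Matrix.transpose_mul, Matrix.transpose_smul, Matrix.mul_assoc] using h
  refine ⟨?_, ?_, ?_, ?_⟩
  · rw [Matrix.mul_smul, Matrix.smul_mul, hmain, smul_smul, inv_mul_cancel₀ hn0, one_smul]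
  · rw [Matrix.smul_mul, Matrix.smul_mul, Matrix.mul_smul, hmainT, smul_smul, smul_smul,
        mul_assoc, inv_mul_cancel₀ hn0, mul_one]
  · rw [Matrix.mul_smul, Matrix.transpose_smul, Matrix.transpose_mul,
        Matrix.transpose_transpose]
  · rw [Matrix.smul_mul, Matrix.transpose_smul, Matrix.transpose_mul,
        Matrix.transpose_transpose]
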